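/- Let a < b be reals, D = [a,b] × [0,1], and let F = (F₁, F₂) : D → ℝ² be continuous with F₁(a, τ) = a and F₁(b, τ) = b for all τ ∈ [0,1], F₂(μ, 0) = 0 for all μ ∈ [a,b], and F₂(μ, 1) < 0 for all μ ∈ [a,b]. Then for every μ₀ ∈ (a,b) and every ε with 0 < ε < −max_{μ ∈ [a,b]} F₂(μ,1), there exists a point z ∈ D with F(z) = (μ₀, −ε). -/

import Mathlib

open Complex Finset

/-- If a real number is `0` as an angle and has absolute value `< 2π`, it is `0`. -/
lemma pm_angle_zero {s : ℝ} (h : (s : Real.Angle) = ((0 : ℝ) : Real.Angle))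
    (hb : |s| < 2 * Real.pi) : s = 0 := by
  obtain ⟨k, hk⟩ := Real.Angle.angle_eq_iff_two_pi_dvd_sub.mp h
  have hπ := Real.pi_pos
  have hks : s = 2 * Real.pi * k := by linarith [hk]
  have h1 : |(k : ℝ)| < 1 := by
    by_contra hc
    push_neg at hc
    have h2 : 2 * Real.pi * 1 ≤ 2 * Real.pi * |(k : ℝ)| := by nlinarith
    rw [hks, abs_mul, abs_of_pos (by positivity : (0:ℝ) < 2 * Real.pi)] at hb
    linarith
  have hk0 : k = 0 := by
    have h3 : ((|k| : ℤ) : ℝ) < 1 := by rwa [← Int.cast_abs] at h1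
    have h4 : |k| < (1 : ℤ) := by exact_mod_cast h3
    rw [abs_lt] at h4
    omega
  rw [hks, hk0]; simp

/-- Telescoping: if both args lie in a common open interval of length `π`,
then `arg (y / x) = arg y - arg x`. -/
lemma pm_arg_div (x y : ℂ) (hx : x ≠ 0) (hy : y ≠ 0) (l : ℝ)
    (hax : Complex.arg x ∈ Set.Ioo l (l + Real.pi))
    (hay : Complex.arg y ∈ Set.Ioo l (l + Real.pi)) :
    Complex.arg (y / x) = Complex.arg y - Complex.arg x := by
  have hang : ((Complex.arg (y / x) - (Complex.arg y - Complex.arg x) : ℝ) : Real.Angle)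
      = ((0 : ℝ) : Real.Angle) := by
    rw [Real.Angle.coe_sub, Real.Angle.coe_sub, Complex.arg_div_coe_angle hy hx]
    simp
  have h1 := Complex.neg_pi_lt_arg (y / x)
  have h2 := Complex.arg_le_pi (y / x)
  obtain ⟨hax1, hax2⟩ := hax
  obtain ⟨hay1, hay2⟩ := hay
  have h3 := pm_angle_zero hang (by rw [abs_lt]; constructor <;> linarith)
  linarith

/-- The arg-sum around a cell vanishes if each side turns by less than `π/2`. -/
lemma pm_cell (x y z w : ℂ) (hx : x ≠ 0) (hy : y ≠ 0) (hz : z ≠ 0) (hw : w ≠ 0)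
    (h1 : |Complex.arg (y / x)| < Real.pi / 2) (h2 : |Complex.arg (z / y)| < Real.pi / 2)
    (h3 : |Complex.arg (z / w)| < Real.pi / 2) (h4 : |Complex.arg (w / x)| < Real.pi / 2) :
    Complex.arg (y / x) + Complex.arg (z / y)
      - Complex.arg (z / w) - Complex.arg (w / x) = 0 := by
  have hang : ((Complex.arg (y / x) + Complex.arg (z / y)
      - Complex.arg (z / w) - Complex.arg (w / x) : ℝ) : Real.Angle)
      = ((0 : ℝ) : Real.Angle) := by
    rw [Real.Angle.coe_sub, Real.Angle.coe_sub, Real.Angle.coe_add,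
      Complex.arg_div_coe_angle hy hx, Complex.arg_div_coe_angle hz hy,
      Complex.arg_div_coe_angle hz hw, Complex.arg_div_coe_angle hw hx]
    abel_nf
    simp
  refine pm_angle_zero hang ?_
  have a1 := abs_lt.mp h1
  have a2 := abs_lt.mp h2
  have a3 := abs_lt.mp h3
  have a4 := abs_lt.mp h4
  rw [abs_lt]
  exact ⟨by linarith [a1.1, a2.1, a3.2, a4.2], by linarith [a1.2, a2.2, a3.1, a4.1]⟩

/-- If `y` is closer to `x` than `|x|`, the ratio `y / x` has arg of absolute value `< π/2`. -/
lemma pm_ratio (x y : ℂ) (hx : x ≠ 0) (h : ‖y - x‖ < ‖x‖) :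
    |Complex.arg (y / x)| < Real.pi / 2 := by
  have hax : 0 < ‖x‖ := norm_pos_iff.mpr hx
  have hd : y / x - 1 = (y - x) / x := by field_simp
  have h1 : ‖y / x - 1‖ < 1 := by
    rw [hd, norm_div, div_lt_one hax]; exact h
  have h2 : |(y / x - 1).re| ≤ ‖y / x - 1‖ := Complex.abs_re_le_norm _
  have h3 : (y / x - 1).re = (y / x).re - 1 := by simp
  have hre : 0 < (y / x).re := by
    have h4 := abs_lt.mp (lt_of_le_of_lt h2 h1)
    rw [h3] at h4
    linarith [h4.1]
  exact Complex.abs_arg_lt_pi_div_two_iff.mpr (Or.inl hre)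

theorem stmt17 (a b : ℝ) (hab : a < b) (F : ℝ × ℝ → ℝ × ℝ)
    (hF : ContinuousOn F (Set.Icc a b ×ˢ Set.Icc 0 1))
    (h1a : ∀ τ ∈ Set.Icc (0 : ℝ) 1, (F (a, τ)).1 = a)
    (h1b : ∀ τ ∈ Set.Icc (0 : ℝ) 1, (F (b, τ)).1 = b)
    (h20 : ∀ μ ∈ Set.Icc a b, (F (μ, 0)).2 = 0)
    (h21 : ∀ μ ∈ Set.Icc a b, (F (μ, 1)).2 < 0)
    (μ₀ : ℝ) (hμ₀ : μ₀ ∈ Set.Ioo a b) (ε : ℝ) (hε : 0 < ε)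
    (hε2 : ε < - sSup ((fun μ => (F (μ, 1)).2) '' Set.Icc a b)) :
    ∃ z ∈ Set.Icc a b ×ˢ Set.Icc (0 : ℝ) 1, F z = (μ₀, -ε) := by
  by_contra hcon
  push_neg at hcon
  have hπ := Real.pi_pos
  set D : Set (ℝ × ℝ) := Set.Icc a b ×ˢ Set.Icc (0 : ℝ) 1 with hD
  set g : ℝ × ℝ → ℂ :=
    fun p => ((F p).1 - μ₀ : ℝ) + ((F p).2 + ε : ℝ) * Complex.I with hg
  have hgre : ∀ p, (g p).re = (F p).1 - μ₀ := by intro p; simp [hg]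
  have hgim : ∀ p, (g p).im = (F p).2 + ε := by intro p; simp [hg]
  have hg0 : ∀ p ∈ D, g p ≠ 0 := by
    intro p hp h0
    refine hcon p hp ?_
    have hre : (g p).re = 0 := by rw [h0]; simp
    have him : (g p).im = 0 := by rw [h0]; simp
    rw [hgre] at hre; rw [hgim] at him
    have e1 : (F p).1 = μ₀ := by linarith
    have e2 : (F p).2 = -ε := by linarith
    rw [show ((μ₀, -ε) : ℝ × ℝ) = ((F p).1, (F p).2) by rw [e1, e2], Prod.mk.eta]
  have hgc : ContinuousOn g D := by
    apply ContinuousOn.add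
    · exact Complex.continuous_ofReal.comp_continuousOn
        ((continuous_fst.comp_continuousOn hF).sub continuousOn_const)
    · exact (Complex.continuous_ofReal.comp_continuousOn
        ((continuous_snd.comp_continuousOn hF).add continuousOn_const)).mul continuousOn_const
  have hDc : IsCompact D := isCompact_Icc.prod isCompact_Icc
  have hD0 : ((a, 0) : ℝ × ℝ) ∈ D := ⟨⟨le_refl a, hab.le⟩, ⟨le_refl (0:ℝ), zero_le_one⟩⟩
  obtain ⟨p₀, hp₀, hmin⟩ := hDc.exists_isMinOn ⟨(a, 0), hD0⟩
    (continuous_norm.comp_continuousOn hgc)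
  set m : ℝ := ‖g p₀‖ with hm_def
  have hm : 0 < m := norm_pos_iff.mpr (hg0 p₀ hp₀)
  have huc := hDc.uniformContinuousOn_of_continuous hgc
  rw [Metric.uniformContinuousOn_iff] at huc
  obtain ⟨δ, hδ, hδ'⟩ := huc m hm
  obtain ⟨n, hn⟩ := exists_nat_gt (max (b - a) 1 / δ)
  have hmaxpos : 0 < max (b - a) 1 := lt_of_lt_of_le zero_lt_one (le_max_right _ _)
  have hnpos : 0 < (n : ℝ) := lt_trans (div_pos hmaxpos hδ) hn
  have hstep : max (b - a) 1 / n < δ := by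
    rw [div_lt_iff₀ hnpos]
    rw [div_lt_iff₀ hδ] at hn
    nlinarith
  -- the grid
  set u : ℕ → ℕ → ℂ := fun i j => g (a + (b - a) * i / n, (j : ℝ) / n) with hu_def
  have hmem : ∀ i ≤ n, ∀ j ≤ n, ((a + (b - a) * i / n, (j : ℝ) / n) : ℝ × ℝ) ∈ D := by
    intro i hi j hj
    have hi' : (i : ℝ) / n ≤ 1 := (div_le_one hnpos).mpr (by exact_mod_cast hi)
    have hj' : (j : ℝ) / n ≤ 1 := (div_le_one hnpos).mpr (by exact_mod_cast hj)
    have hi0 : (0:ℝ) ≤ (i : ℝ) / n := by positivity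
    have hj0 : (0:ℝ) ≤ (j : ℝ) / n := by positivity
    refine ⟨⟨?_, ?_⟩, hj0, hj'⟩
    · show a ≤ a + (b - a) * i / n
      rw [mul_div_assoc]
      nlinarith
    · show a + (b - a) * i / n ≤ b
      rw [mul_div_assoc]; nlinarith
  have hu : ∀ i ≤ n, ∀ j ≤ n, u i j ≠ 0 := fun i hi j hj => hg0 _ (hmem i hi j hj)
  -- distances between adjacent grid points
  have hdH : ∀ i j : ℕ, dist ((a + (b - a) * i / n, (j : ℝ) / n) : ℝ × ℝ)
      ((a + (b - a) * ((i+1 : ℕ) : ℝ) / n, (j : ℝ) / n) : ℝ × ℝ) < δ := by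
    intro i j
    rw [Prod.dist_eq]
    have h2 : dist ((j : ℝ) / n) ((j : ℝ) / n) = 0 := by simp
    have h1 : dist (a + (b - a) * i / n) (a + (b - a) * ((i+1 : ℕ) : ℝ) / n) = (b - a) / n := by
      rw [Real.dist_eq]
      push_cast
      have he : a + (b - a) * i / n - (a + (b - a) * ((i:ℝ) + 1) / n) = -((b - a) / n) := by
        field_simp; ring
      rw [he, abs_neg, _root_.abs_of_nonneg (div_nonneg (by linarith) hnpos.le)]
    rw [h1, h2]
    have h3 : (b - a) / n ≤ max (b - a) 1 / n :=
      (div_le_div_iff_of_pos_right hnpos).mpr (le_max_left _ _)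
    exact max_lt (lt_of_le_of_lt h3 hstep) hδ
  have hdV : ∀ i j : ℕ, dist ((a + (b - a) * i / n, (j : ℝ) / n) : ℝ × ℝ)
      ((a + (b - a) * i / n, ((j+1 : ℕ) : ℝ) / n) : ℝ × ℝ) < δ := by
    intro i j
    rw [Prod.dist_eq]
    have h1 : dist (a + (b - a) * i / n) (a + (b - a) * i / n) = 0 := by simp
    have h2 : dist ((j : ℝ) / n) (((j+1 : ℕ) : ℝ) / n) = 1 / n := by
      rw [Real.dist_eq]
      push_cast
      have he : (j : ℝ) / n - ((j:ℝ) + 1) / n = -(1 / n) := by field_simp; ring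
      rw [he, abs_neg, _root_.abs_of_nonneg (div_nonneg (by linarith) hnpos.le)]
    rw [h1, h2]
    have h3 : (1:ℝ) / n ≤ max (b - a) 1 / n :=
      (div_le_div_iff_of_pos_right hnpos).mpr (le_max_right _ _)
    exact max_lt hδ (lt_of_le_of_lt h3 hstep)
  have hclose : ∀ p ∈ D, ∀ q ∈ D, dist p q < δ → ‖g q - g p‖ < ‖g p‖ := by
    intro p hp q hq hpq
    have h1 := hδ' q hq p hp (by rwa [dist_comm])
    rw [Complex.dist_eq] at h1
    exact lt_of_lt_of_le h1 (hmin hp)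
  have hadjH : ∀ i < n, ∀ j ≤ n, |Complex.arg (u (i+1) j / u i j)| < Real.pi / 2 := by
    intro i hi j hj
    exact pm_ratio _ _ (hu i hi.le j hj)
      (hclose _ (hmem i hi.le j hj) _ (hmem (i+1) hi j hj) (hdH i j))
  have hadjV : ∀ i ≤ n, ∀ j < n, |Complex.arg (u i (j+1) / u i j)| < Real.pi / 2 := by
    intro i hi j hj
    exact pm_ratio _ _ (hu i hi j hj.le)
      (hclose _ (hmem i hi j hj.le) _ (hmem i hi (j+1) hj) (hdV i j))
  -- boundary sign conditions
  have him0 : ∀ i ≤ n, 0 < (u i 0).im := by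
    intro i hi
    have hμ := (hmem i hi 0 (Nat.zero_le n)).1
    simp only [hu_def, hgim]
    simp only [Nat.cast_zero, zero_div] at hμ ⊢
    rw [h20 _ hμ]
    linarith
  have htopv : ∀ μ ∈ Set.Icc a b, (F (μ, 1)).2 + ε < 0 := by
    have hconts : ContinuousOn (fun μ => (F (μ, 1)).2) (Set.Icc a b) := by
      apply continuous_snd.comp_continuousOn
      exact hF.comp (Continuous.continuousOn (continuous_id.prodMk continuous_const))
        (fun μ hμ => ⟨hμ, ⟨zero_le_one, le_refl (1:ℝ)⟩⟩)
    have hbdd : BddAbove ((fun μ => (F (μ, 1)).2) '' Set.Icc a b) :=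
      isCompact_Icc.bddAbove_image hconts
    intro μ hμ
    have h1 : (F (μ, 1)).2 ≤ sSup ((fun μ => (F (μ, 1)).2) '' Set.Icc a b) :=
      le_csSup hbdd ⟨μ, hμ, rfl⟩
    linarith
  have him1 : ∀ i ≤ n, (u i n).im < 0 := by
    intro i hi
    have hμ := (hmem i hi n (le_refl n)).1
    simp only [hu_def, hgim]
    rw [div_self hnpos.ne']
    exact htopv _ hμ
  have hre0 : ∀ j ≤ n, (u 0 j).re < 0 := by
    intro j hj
    have hτ := (hmem 0 (Nat.zero_le n) j hj).2
    simp only [hu_def, hgre]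
    simp only [Nat.cast_zero, mul_zero, zero_div, add_zero] at hτ ⊢
    rw [h1a _ hτ]
    linarith [hμ₀.1]
  have hreN : ∀ j ≤ n, 0 < (u n j).re := by
    intro j hj
    have hτ := (hmem n (le_refl n) j hj).2
    simp only [hu_def, hgre]
    rw [show a + (b - a) * (n:ℝ) / n = b by field_simp; ring]
    rw [h1b _ hτ]
    linarith [hμ₀.2]
  -- arg ranges in half planes
  have hIm_pos : ∀ v : ℂ, 0 < v.im → Complex.arg v ∈ Set.Ioo 0 (0 + Real.pi) := by
    intro v hv
    constructor
    · rcases eq_or_lt_of_le (Complex.arg_nonneg_iff.mpr hv.le) with h | h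
      · exfalso
        have := (Complex.arg_eq_zero_iff.mp h.symm).2
        linarith
      · exact h
    · rw [zero_add]
      refine lt_of_le_of_ne (Complex.arg_le_pi v) (fun h => ?_)
      have := (Complex.arg_eq_pi_iff.mp h).2
      linarith
  have hIm_neg : ∀ v : ℂ, v.im < 0 → Complex.arg v ∈ Set.Ioo (-Real.pi) (-Real.pi + Real.pi) := by
    intro v hv
    refine ⟨Complex.neg_pi_lt_arg v, ?_⟩
    rw [neg_add_cancel]
    exact Complex.arg_neg_iff.mpr hv
  have hRe_pos : ∀ v : ℂ, 0 < v.re →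
      Complex.arg v ∈ Set.Ioo (-(Real.pi/2)) (-(Real.pi/2) + Real.pi) := by
    intro v hv
    have h1 := abs_lt.mp (Complex.abs_arg_lt_pi_div_two_iff.mpr (Or.inl hv))
    exact ⟨by linarith [h1.1], by linarith [h1.2]⟩
  -- edge functions
  set A : ℕ → ℕ → ℝ := fun i j => Complex.arg (u (i+1) j / u i j) with hA_def
  set B : ℕ → ℕ → ℝ := fun i j => Complex.arg (u i (j+1) / u i j) with hB_def
  have hcell : ∀ j < n, ∀ i < n, A i j + B (i+1) j - A i (j+1) - B i j = 0 := by
    intro j hj i hi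
    simp only [hA_def, hB_def]
    exact pm_cell (u i j) (u (i+1) j) (u (i+1) (j+1)) (u i (j+1))
      (hu i hi.le j hj.le) (hu (i+1) hi j hj.le) (hu (i+1) hi (j+1) hj) (hu i hi.le (j+1) hj)
      (hadjH i hi j hj.le) (hadjV (i+1) hi j hj) (hadjH i hi (j+1) hj) (hadjV i hi.le j hj)
  have hsum0 : ∑ j ∈ range n, ∑ i ∈ range n, (A i j + B (i+1) j - A i (j+1) - B i j) = 0 :=
    Finset.sum_eq_zero fun j hj => Finset.sum_eq_zero fun i hi =>
      hcell j (mem_range.mp hj) i (mem_range.mp hi)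
  have hsplit : ∑ j ∈ range n, ∑ i ∈ range n, (A i j + B (i+1) j - A i (j+1) - B i j)
      = (∑ i ∈ range n, (A i 0 - A i n)) + (∑ j ∈ range n, (B n j - B 0 j)) := by
    have e1 : ∀ j, ∑ i ∈ range n, (A i j + B (i+1) j - A i (j+1) - B i j)
        = (∑ i ∈ range n, (A i j - A i (j+1))) + (B n j - B 0 j) := by
      intro j
      rw [show (fun i => A i j + B (i+1) j - A i (j+1) - B i j)
          = fun i => (A i j - A i (j+1)) + (B (i+1) j - B i j) from funext fun i => by ring]
      rw [Finset.sum_add_distrib, Finset.sum_range_sub (fun i => B i j)]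
    rw [Finset.sum_congr rfl (fun j _ => e1 j), Finset.sum_add_distrib]
    congr 1
    rw [Finset.sum_comm]
    exact Finset.sum_congr rfl fun i _ => Finset.sum_range_sub' (fun j => A i j) n
  -- boundary telescoping
  have hbot : ∑ i ∈ range n, A i 0 = Complex.arg (u n 0) - Complex.arg (u 0 0) := by
    rw [← Finset.sum_range_sub (fun i => Complex.arg (u i 0))]
    refine Finset.sum_congr rfl fun i hi => ?_
    have hi' := mem_range.mp hi
    simp only [hA_def]
    exact pm_arg_div _ _ (hu i hi'.le 0 (Nat.zero_le n)) (hu (i+1) hi' 0 (Nat.zero_le n)) 0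
      (hIm_pos _ (him0 i hi'.le)) (hIm_pos _ (him0 (i+1) hi'))
  have htops : ∑ i ∈ range n, A i n = Complex.arg (u n n) - Complex.arg (u 0 n) := by
    rw [← Finset.sum_range_sub (fun i => Complex.arg (u i n))]
    refine Finset.sum_congr rfl fun i hi => ?_
    have hi' := mem_range.mp hi
    simp only [hA_def]
    exact pm_arg_div _ _ (hu i hi'.le n (le_refl n)) (hu (i+1) hi' n (le_refl n)) (-Real.pi)
      (hIm_neg _ (him1 i hi'.le)) (hIm_neg _ (him1 (i+1) hi'))
  have hright : ∑ j ∈ range n, B n j = Complex.arg (u n n) - Complex.arg (u n 0) := by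
    rw [← Finset.sum_range_sub (fun j => Complex.arg (u n j))]
    refine Finset.sum_congr rfl fun j hj => ?_
    have hj' := mem_range.mp hj
    simp only [hB_def]
    exact pm_arg_div _ _ (hu n (le_refl n) j hj'.le) (hu n (le_refl n) (j+1) hj') (-(Real.pi/2))
      (hRe_pos _ (hreN j hj'.le)) (hRe_pos _ (hreN (j+1) hj'))
  have hleft : ∑ j ∈ range n, B 0 j
      = Complex.arg (-(u 0 n)) - Complex.arg (-(u 0 0)) := by
    rw [← Finset.sum_range_sub (fun j => Complex.arg (-(u 0 j)))]
    refine Finset.sum_congr rfl fun j hj => ?_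
    have hj' := mem_range.mp hj
    simp only [hB_def]
    rw [show u 0 (j+1) / u 0 j = (-(u 0 (j+1))) / (-(u 0 j)) from (neg_div_neg_eq _ _).symm]
    refine pm_arg_div _ _ (neg_ne_zero.mpr (hu 0 (Nat.zero_le n) j hj'.le))
      (neg_ne_zero.mpr (hu 0 (Nat.zero_le n) (j+1) hj')) (-(Real.pi/2)) ?_ ?_
    · refine hRe_pos _ ?_
      rw [Complex.neg_re]
      linarith [hre0 j hj'.le]
    · refine hRe_pos _ ?_
      rw [Complex.neg_re]
      linarith [hre0 (j+1) hj']
  have hc1 : Complex.arg (-(u 0 0)) = Complex.arg (u 0 0) - Real.pi :=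
    Complex.arg_neg_eq_arg_sub_pi_of_im_pos (him0 0 (Nat.zero_le n))
  have hc2 : Complex.arg (-(u 0 n)) = Complex.arg (u 0 n) + Real.pi :=
    Complex.arg_neg_eq_arg_add_pi_of_im_neg (him1 0 (Nat.zero_le n))
  rw [hsplit, Finset.sum_sub_distrib, Finset.sum_sub_distrib,
    hbot, htops, hright, hleft, hc1, hc2] at hsum0
  linarith
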